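/- Let n ≥ 2, 1 ≤ l < k ≤ n with k − l = 1, α > 0, and let A = diag(a_1,…,a_n) ∈ 𝒜_{k,l} be diagonal with a = (a_1,…,a_n). Assume H_k(a) − h_l(a) = 1/2, and let ω_α(x) := ω_α(½ xᵀA x). Then the quantity μ₃(α) := β − s̄ − α ln s̄ + ∫_{s̄}^∞ (v_α(t) − 1 − α/t) dt is finite and ω_α(x) = ½ xᵀA x + α ln(½ xᵀA x) + μ₃(α) + O(|x|^{−2}) as |x| → ∞. -/

import Mathlib

open scoped BigOperators
open Filter MeasureTheory Set

noncomputable section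

/-- Euclidean `n`-space `ℝⁿ`. -/
abbrev En (n : ℕ) : Type := EuclideanSpace ℝ (Fin n)

/-- `σ_k(a)`: the `k`-th elementary symmetric polynomial of `a : Fin n → ℝ`. -/
def esym (n k : ℕ) (a : Fin n → ℝ) : ℝ :=
  ∑ t ∈ Finset.powersetCard k (Finset.univ : Finset (Fin n)), ∏ i ∈ t, a i

/-- `σ_{k;i}(a) := σ_k(a)|_{a_i = 0}`. -/
def esymDel (n k : ℕ) (a : Fin n → ℝ) (i : Fin n) : ℝ :=
  esym n k (Function.update a i 0)

/-- `H_k(a) = max_{1 ≤ i ≤ n} σ_{k-1;i}(a) a_i / σ_k(a)`. -/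
def Hfun (n k : ℕ) (a : Fin n → ℝ) : ℝ :=
  ⨆ i : Fin n, esymDel n (k - 1) a i * a i / esym n k a

/-- `h_l(a) = min_{1 ≤ i ≤ n} σ_{l-1;i}(a) a_i / σ_l(a)`, with `h_0 = 0`. -/
def hfun (n l : ℕ) (a : Fin n → ℝ) : ℝ :=
  if l = 0 then 0 else ⨅ i : Fin n, esymDel n (l - 1) a i * a i / esym n l a

/-- The Hessian matrix `D²u(x)` of a function `u : ℝⁿ → ℝ`. -/
def hess {n : ℕ} (u : En n → ℝ) (x : En n) : Matrix (Fin n) (Fin n) ℝ :=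
  Matrix.of fun i j =>
    fderiv ℝ (fun y => fderiv ℝ u y (EuclideanSpace.single j 1)) x (EuclideanSpace.single i 1)

/-- `σ_k(λ(M))`: the `k`-th elementary symmetric function of the eigenvalues of `M`,
expressed via the coefficients of the characteristic polynomial. -/
def sigmaEig {n : ℕ} (k : ℕ) (M : Matrix (Fin n) (Fin n) ℝ) : ℝ :=
  (-1 : ℝ) ^ k * M.charpoly.coeff (n - k)

/-- The Hessian quotient operator `S_{k,l}(M) = σ_k(λ(M))/σ_l(λ(M))`. -/
def Skl {n : ℕ} (k l : ℕ) (M : Matrix (Fin n) (Fin n) ℝ) : ℝ :=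
  sigmaEig k M / sigmaEig l M

/-- The Garding cone `Γ_k = {λ : σ_j(λ) > 0, 1 ≤ j ≤ k}`. -/
def GammaCone (n k : ℕ) : Set (Fin n → ℝ) :=
  {lam | ∀ j : ℕ, 1 ≤ j → j ≤ k → 0 < esym n j lam}

/-- `ψ` is `k`-convex at `x`: the (symmetric) Hessian has eigenvalue vector in `closure Γ_k`. -/
def KConvexAt (n k : ℕ) (ψ : En n → ℝ) (x : En n) : Prop :=
  ∃ hsym : (hess ψ x).IsHermitian, hsym.eigenvalues ∈ closure (GammaCone n k)

/-- Viscosity subsolution of `S_{k,l}(D²u) = 1` on `Ω`. -/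
def ViscSubOn (n k l : ℕ) (Ω : Set (En n)) (u : En n → ℝ) : Prop :=
  UpperSemicontinuousOn u Ω ∧
  ∀ ψ : En n → ℝ, ContDiffOn ℝ 2 ψ Ω → (∀ x ∈ Ω, KConvexAt n k ψ x) →
    ∀ x₀ ∈ Ω, ψ x₀ = u x₀ → (∀ x ∈ Ω, u x ≤ ψ x) → 1 ≤ Skl k l (hess ψ x₀)

/-- Viscosity supersolution of `S_{k,l}(D²u) = 1` on `Ω`. -/
def ViscSupOn (n k l : ℕ) (Ω : Set (En n)) (u : En n → ℝ) : Prop :=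
  LowerSemicontinuousOn u Ω ∧
  ∀ ψ : En n → ℝ, ContDiffOn ℝ 2 ψ Ω → (∀ x ∈ Ω, KConvexAt n k ψ x) →
    ∀ x₀ ∈ Ω, ψ x₀ = u x₀ → (∀ x ∈ Ω, ψ x ≤ u x) → Skl k l (hess ψ x₀) ≤ 1

/-- Viscosity solution of the exterior Dirichlet problem
`S_{k,l}(D²u) = 1` in `ℝⁿ ∖ D̄`, `u = φ` on `∂D`, `u ∈ C⁰(ℝⁿ ∖ D)`. -/
def ExtViscSolution (n k l : ℕ) (D : Set (En n)) (φ u : En n → ℝ) : Prop :=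
  ContinuousOn u Dᶜ ∧
  ViscSubOn n k l (closure D)ᶜ u ∧
  ViscSupOn n k l (closure D)ᶜ u ∧
  ∀ x ∈ frontier D, u x = φ x

/-- A smooth, bounded, strictly convex open set. -/
structure SmoothStrictlyConvexDomain (n : ℕ) (D : Set (En n)) : Prop where
  isOpen : IsOpen D
  nonempty : D.Nonempty
  bounded : Bornology.IsBounded D
  strictConvex : StrictConvex ℝ D
  smoothBoundary : ∃ f : En n → ℝ, ContDiff ℝ (⊤ : ℕ∞) f ∧ D = {x | f x < 0} ∧
    ∀ x ∈ frontier D, fderiv ℝ f x ≠ 0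

/-- `½ xᵀ A x`. -/
def quadForm {n : ℕ} (A : Matrix (Fin n) (Fin n) ℝ) (x : En n) : ℝ :=
  (1 / 2) * ∑ i, ∑ j, A i j * x i * x j

/-- `s(x) = ½ ∑ a_i x_i²` (i.e. `½ xᵀAx` for `A = diag a`). -/
def sdiag {n : ℕ} (a : Fin n → ℝ) (x : En n) : ℝ :=
  (1 / 2) * ∑ i, a i * x i ^ 2

end

noncomputable section

/-- `ℋ = (k − l)/(2(H − h))`. -/
def calH (k l : ℕ) (H h : ℝ) : ℝ := ((k : ℝ) - l) / (2 * (H - h))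

/-- The defining property of the function `v_α`: for every `s > 0`, `v_α(s) > 1` and
`(v_α(s)^{k−l} − 1) v_α(s)^{2ℋh} = α s^{−ℋ}`. -/
def IsVsol (k l : ℕ) (H h α : ℝ) (v : ℝ → ℝ) : Prop :=
  ∀ s : ℝ, 0 < s → 1 < v s ∧
    (v s ^ (k - l) - 1) * v s ^ (2 * calH k l H h * h) = α * s ^ (-calH k l H h)

/-- `ω_α(x) = β + ∫_{s̄}^{½xᵀAx} v_α(t) dt` for `A = diag a`. -/
def omegaA {n : ℕ} (β sbar : ℝ) (v : ℝ → ℝ) (a : Fin n → ℝ) (x : En n) : ℝ :=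
  β + ∫ t in sbar..(sdiag a x), v t

end


section AuxProofs

private lemma rpow_neg_two_eq {t : ℝ} (ht : 0 < t) : t ^ (-2 : ℝ) = 1 / t ^ 2 := by
  rw [show (-2:ℝ) = -((2:ℕ):ℝ) by norm_num, Real.rpow_neg ht.le, Real.rpow_natCast]
  rw [one_div]

private lemma core_bounds (h α : ℝ) (hh : 0 ≤ h) (hα : 0 < α)
    (v : ℝ → ℝ) (hv1 : ∀ s, 0 < s → 1 < v s)
    (hveq : ∀ s, 0 < s → (v s - 1) * (v s) ^ (2*h) = α / s) :
    ∀ s, 0 < s → (v s - 1 ≤ α / s ∧ v s - 1 - α / s ≤ 0 ∧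
      |v s - 1 - α / s| ≤ (2*h*α^2) * s ^ (-2:ℝ)) := by
  intro s hs
  have h1 : 1 < v s := hv1 s hs
  have hvpos : (0:ℝ) < v s := by linarith
  have hp : (0:ℝ) < (v s) ^ (2*h) := Real.rpow_pos_of_pos hvpos _
  have hp1 : (1:ℝ) ≤ (v s) ^ (2*h) := by
    calc (1:ℝ) = 1 ^ (2*h) := (Real.one_rpow _).symm
    _ ≤ (v s) ^ (2*h) := Real.rpow_le_rpow zero_le_one h1.le (by positivity)
  have heq := hveq s hs
  have hαs : 0 < α / s := div_pos hα hs
  have key : v s - 1 = (α / s) * ((v s) ^ (2*h))⁻¹ := by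
    field_simp at heq ⊢
    linarith [heq]
  have hle : v s - 1 ≤ α / s := by
    rw [key]
    calc (α/s) * ((v s) ^ (2*h))⁻¹ ≤ (α/s) * 1 := by
          apply mul_le_mul_of_nonneg_left _ hαs.le
          exact inv_le_one_of_one_le₀ hp1
    _ = α / s := mul_one _
  refine ⟨hle, by linarith, ?_⟩
  have hdiff : v s - 1 - α / s = (α/s) * (((v s) ^ (2*h))⁻¹ - 1) := by
    rw [key]; ring
  have hinv : ((v s) ^ (2*h))⁻¹ = (v s) ^ (-(2*h)) := (Real.rpow_neg hvpos.le _).symm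
  have hbound : 1 - ((v s) ^ (2*h))⁻¹ ≤ 2*h*(v s - 1) := by
    rw [hinv, Real.rpow_def_of_pos hvpos]
    have h2 : 1 - Real.exp (Real.log (v s) * -(2*h)) ≤ -(Real.log (v s) * -(2*h)) := by
      have := Real.add_one_le_exp (Real.log (v s) * -(2*h))
      linarith
    have h3 : Real.log (v s) ≤ v s - 1 := by
      have := Real.log_le_sub_one_of_pos hvpos; linarith
    have hlog : 0 ≤ Real.log (v s) := Real.log_nonneg h1.le
    nlinarith
  rw [hdiff, abs_mul, abs_of_pos hαs,
    abs_of_nonpos (by linarith [inv_le_one_of_one_le₀ hp1]), rpow_neg_two_eq hs]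
  have : -((((v s) ^ (2*h)))⁻¹ - 1) = 1 - ((v s) ^ (2*h))⁻¹ := by ring
  rw [this]
  have hv1b : v s - 1 ≤ α / s := hle
  calc α / s * (1 - ((v s) ^ (2*h))⁻¹) ≤ α / s * (2*h*(α/s)) := by
        apply mul_le_mul_of_nonneg_left _ hαs.le
        calc 1 - ((v s) ^ (2*h))⁻¹ ≤ 2*h*(v s - 1) := hbound
        _ ≤ 2*h*(α/s) := by nlinarith
  _ = 2*h*α^2 * (1 / s^2) := by field_simp

private lemma v_antitoneOn (h α : ℝ) (hh : 0 ≤ h) (hα : 0 < α)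
    (v : ℝ → ℝ) (hv1 : ∀ s, 0 < s → 1 < v s)
    (hveq : ∀ s, 0 < s → (v s - 1) * (v s) ^ (2*h) = α / s) :
    ∀ s₁ s₂, 0 < s₁ → s₁ ≤ s₂ → v s₂ ≤ v s₁ := by
  intro s₁ s₂ h1 h12
  by_contra hlt
  push_neg at hlt
  have h2 : 0 < s₂ := lt_of_lt_of_le h1 h12
  have hv1' := hv1 s₁ h1
  have hv2' := hv1 s₂ h2
  -- strict monotonicity of x ↦ (x-1)x^(2h) on (1,∞)
  have hmono : (v s₁ - 1) * (v s₁) ^ (2*h) < (v s₂ - 1) * (v s₂) ^ (2*h) := by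
    have hp1 : (0:ℝ) < (v s₁) ^ (2*h) := Real.rpow_pos_of_pos (by linarith) _
    have hp2 : (v s₁) ^ (2*h) ≤ (v s₂) ^ (2*h) :=
      Real.rpow_le_rpow (by linarith) hlt.le (by positivity)
    have : (v s₁ - 1) * (v s₁) ^ (2*h) < (v s₂ - 1) * (v s₁) ^ (2*h) := by
      apply mul_lt_mul_of_pos_right (by linarith) hp1
    calc (v s₁ - 1) * (v s₁) ^ (2*h) < (v s₂ - 1) * (v s₁) ^ (2*h) := this
    _ ≤ (v s₂ - 1) * (v s₂) ^ (2*h) := by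
        apply mul_le_mul_of_nonneg_left hp2 (by linarith)
  rw [hveq s₁ h1, hveq s₂ h2] at hmono
  have : α / s₂ ≤ α / s₁ := div_le_div_of_nonneg_left hα.le h1 h12
  linarith

private lemma v_measurableOn (h α sbar : ℝ) (hh : 0 ≤ h) (hα : 0 < α) (hsbar : 0 < sbar)
    (v : ℝ → ℝ) (hv1 : ∀ s, 0 < s → 1 < v s)
    (hveq : ∀ s, 0 < s → (v s - 1) * (v s) ^ (2*h) = α / s) :
    ∃ V : ℝ → ℝ, Measurable V ∧ EqOn V v (Ici sbar) := by
  refine ⟨fun t => v (max t sbar), ?_, ?_⟩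
  · apply Antitone.measurable
    intro t₁ t₂ ht
    exact v_antitoneOn h α hh hα v hv1 hveq _ _ (lt_of_lt_of_le hsbar (le_max_right _ _))
      (max_le_max ht le_rfl)
  · intro t ht
    simp only [max_eq_left (mem_Ici.mp ht : sbar ≤ t)]

private lemma core_int (h α sbar : ℝ) (hh : 0 ≤ h) (hα : 0 < α) (hsbar : 0 < sbar)
    (v : ℝ → ℝ)
    (hbd : ∀ s, 0 < s → |v s - 1 - α / s| ≤ (2*h*α^2) * s ^ (-2:ℝ))
    (V : ℝ → ℝ) (hVm : Measurable V) (hVe : EqOn V v (Ici sbar)) :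
    ∀ c, sbar ≤ c → IntegrableOn (fun t => v t - 1 - α / t) (Ioi c) volume := by
  intro c hc
  have hcpos : 0 < c := lt_of_lt_of_le hsbar hc
  have hGm : Measurable (fun t => V t - 1 - α / t) := by
    exact (hVm.sub measurable_const).sub (measurable_const.div measurable_id)
  have hbig : IntegrableOn (fun t => (2*h*α^2) * t ^ (-2:ℝ)) (Ioi c) volume :=
    (integrableOn_Ioi_rpow_of_lt (by norm_num) hcpos).const_mul _
  have hG : IntegrableOn (fun t => V t - 1 - α / t) (Ioi c) volume := by
    apply Integrable.mono' hbig (hGm.aestronglyMeasurable.restrict)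
    rw [ae_restrict_iff' measurableSet_Ioi]
    filter_upwards with t ht
    have htpos : 0 < t := lt_trans hcpos ht
    have : V t = v t := hVe (mem_Ici.mpr (le_trans hc ht.le))
    rw [Real.norm_eq_abs, this]
    exact hbd t htpos
  exact hG.congr_fun (fun t ht => by
    dsimp only
    rw [hVe (mem_Ici.mpr (le_trans hc (mem_Ioi.mp ht).le))]) measurableSet_Ioi

private lemma core_tail (h α : ℝ) (hh : 0 ≤ h) (hα : 0 < α)
    (v : ℝ → ℝ)
    (hbd : ∀ s, 0 < s → |v s - 1 - α / s| ≤ (2*h*α^2) * s ^ (-2:ℝ))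
    (s : ℝ) (hs : 0 < s)
    (hint : IntegrableOn (fun t => v t - 1 - α / t) (Ioi s) volume) :
    |∫ t in Ioi s, (v t - 1 - α / t)| ≤ (2*h*α^2) / s := by
  have hbig : IntegrableOn (fun t => (2*h*α^2) * t ^ (-2:ℝ)) (Ioi s) volume :=
    (integrableOn_Ioi_rpow_of_lt (by norm_num) hs).const_mul _
  have h1 : ‖∫ t in Ioi s, (v t - 1 - α / t)‖ ≤ ∫ t in Ioi s, (2*h*α^2) * t ^ (-2:ℝ) := by
    apply norm_integral_le_of_norm_le hbig
    rw [ae_restrict_iff' measurableSet_Ioi]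
    filter_upwards with t ht
    exact (Real.norm_eq_abs _) ▸ hbd t (lt_trans hs ht)
  rw [Real.norm_eq_abs] at h1
  have h2 : ∫ t in Ioi s, (2*h*α^2) * t ^ (-2:ℝ) = (2*h*α^2) / s := by
    rw [MeasureTheory.integral_const_mul, integral_Ioi_rpow_of_lt (by norm_num) hs]
    norm_num
    rw [Real.rpow_neg_one]
    field_simp
  linarith [h1, h2.le]

private lemma core_interval (α sbar s : ℝ) (hsbar : 0 < sbar) (hs : sbar ≤ s)
    (v : ℝ → ℝ)
    (hIoi : IntegrableOn (fun t => v t - 1 - α / t) (Ioi sbar) volume)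
    (hIoiS : IntegrableOn (fun t => v t - 1 - α / t) (Ioi s) volume) :
    (∫ t in sbar..s, v t) =
      (s - sbar) + α * (Real.log s - Real.log sbar)
        + (∫ t in Ioi sbar, (v t - 1 - α / t)) - ∫ t in Ioi s, (v t - 1 - α / t) := by
  set g : ℝ → ℝ := fun t => v t - 1 - α / t with hg
  have hIoc : IntegrableOn g (Ioc sbar s) volume := hIoi.mono_set Ioc_subset_Ioi_self
  have hgI : IntervalIntegrable g volume sbar s :=
    (intervalIntegrable_iff_integrableOn_Ioc_of_le hs).mpr hIoc
  have huIcc : uIcc sbar s = Icc sbar s := uIcc_of_le hs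
  have hcont : ContinuousOn (fun t : ℝ => 1 + α / t) (uIcc sbar s) := by
    rw [huIcc]
    apply continuousOn_const.add (continuousOn_const.div continuousOn_id ?_)
    intro t ht
    exact ne_of_gt (lt_of_lt_of_le hsbar ht.1)
  have hdivI : IntervalIntegrable (fun t : ℝ => 1 + α / t) volume sbar s :=
    hcont.intervalIntegrable
  have hsplit : (∫ t in sbar..s, v t) = (∫ t in sbar..s, g t) + ∫ t in sbar..s, (1 + α / t) := by
    rw [← intervalIntegral.integral_add hgI hdivI]
    apply intervalIntegral.integral_congr
    intro t _
    simp only [hg]; ring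
  have hone : (∫ t in sbar..s, (1 + α / t)) = (s - sbar) + α * (Real.log s - Real.log sbar) := by
    have h0 : (0:ℝ) ∉ uIcc sbar s := by
      rw [huIcc]; intro hmem; exact absurd hmem.1 (not_le.mpr hsbar)
    have hinv : IntervalIntegrable (fun t : ℝ => α * (1/t)) volume sbar s := by
      apply ContinuousOn.intervalIntegrable
      rw [huIcc]
      apply continuousOn_const.mul (continuousOn_const.div continuousOn_id ?_)
      intro t ht; exact ne_of_gt (lt_of_lt_of_le hsbar ht.1)
    have : (∫ t in sbar..s, (1 + α / t)) = (∫ t in sbar..s, (1:ℝ)) + ∫ t in sbar..s, α * (1/t) := by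
      rw [← intervalIntegral.integral_add intervalIntegrable_const hinv]
      apply intervalIntegral.integral_congr
      intro t ht
      have : t ≠ 0 := by rw [huIcc] at ht; exact ne_of_gt (lt_of_lt_of_le hsbar ht.1)
      field_simp
    rw [this, intervalIntegral.integral_const, intervalIntegral.integral_const_mul,
      integral_one_div h0, Real.log_div (by linarith) (by linarith)]
    simp [smul_eq_mul]
  have hunion : (∫ t in Ioi sbar, g t) = (∫ t in Ioc sbar s, g t) + ∫ t in Ioi s, g t := by
    rw [← setIntegral_union (Ioc_disjoint_Ioi le_rfl) measurableSet_Ioi hIoc hIoiS,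
      Ioc_union_Ioi_eq_Ioi hs]
  have hioc : (∫ t in sbar..s, g t) = ∫ t in Ioc sbar s, g t :=
    intervalIntegral.integral_of_le hs
  rw [hsplit, hone, hioc]
  linarith [hunion]

end AuxProofs

/-- Proposition 2.2 (iii): asymptotics of `ω_α` when `k − l = 1` and `H_k − h_l = 1/2`. -/
theorem omega_asymptotics_critical
    (n k l : ℕ) (hn : 2 ≤ n) (hl1 : 1 ≤ l) (hlk : l < k) (hkn : k ≤ n)
    (hkl1 : k - l = 1)
    (α : ℝ) (hα : 0 < α)
    (a : Fin n → ℝ) (ha : ∀ i, 0 < a i)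
    (hA : esym n k a = esym n l a)
    (hHh : Hfun n k a - hfun n l a = 1 / 2)
    (β sbar : ℝ) (hsbar : 0 < sbar)
    (v : ℝ → ℝ) (hv : IsVsol k l (Hfun n k a) (hfun n l a) α v) :
    IntegrableOn (fun t => v t - 1 - α / t) (Set.Ioi sbar) ∧
    ∃ C R : ℝ, 0 < C ∧ 0 < R ∧ ∀ x : En n, R ≤ ‖x‖ →
      |omegaA β sbar v a x -
          (sdiag a x + α * Real.log (sdiag a x) +
            (β - sbar - α * Real.log sbar + ∫ t in Set.Ioi sbar, (v t - 1 - α / t)))| ≤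
        C * ‖x‖ ^ (-2 : ℝ) := by
    -- auxiliary positivity facts
    have hnz : l ≠ 0 := Nat.one_le_iff_ne_zero.mp hl1
    have hesym_nonneg : ∀ (m : ℕ) (b : Fin n → ℝ), (∀ i, 0 ≤ b i) → 0 ≤ esym n m b := by
      intro m b hb
      apply Finset.sum_nonneg
      intro t _
      exact Finset.prod_nonneg fun i _ => hb i
    have hh0 : 0 ≤ hfun n l a := by
      rw [hfun, if_neg hnz]
      apply Real.iInf_nonneg
      intro i
      apply div_nonneg
      · apply mul_nonneg _ (ha i).le
        apply hesym_nonneg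
        intro j
        rcases eq_or_ne j i with rfl | hji
        · simp [Function.update_self]
        · rw [Function.update_of_ne hji]; exact (ha j).le
      · exact hesym_nonneg l a fun i => (ha i).le
    set h := hfun n l a with hdef
    -- the ODE-type relation in simplified form
    have hH1 : calH k l (Hfun n k a) h = 1 := by
      have hcast : ((k : ℝ) - l) = 1 := by
        have h2 : ((k - l : ℕ) : ℝ) = (k : ℝ) - l := Nat.cast_sub hlk.le
        rw [hkl1] at h2
        simpa using h2.symm
      rw [calH, hcast, hHh]
      norm_num
    have hv' := hv
    unfold IsVsol at hv'
    have hv1 : ∀ s, 0 < s → 1 < v s := fun s hs => (hv' s hs).1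
    have hveq : ∀ s, 0 < s → (v s - 1) * (v s) ^ (2 * h) = α / s := by
      intro s hs
      have heq := (hv' s hs).2
      rw [hkl1, pow_one, hH1] at heq
      rw [show (2:ℝ) * 1 * h = 2 * h by ring] at heq
      rwa [Real.rpow_neg_one, ← div_eq_mul_inv] at heq
    have hbd : ∀ s, 0 < s → |v s - 1 - α / s| ≤ (2*h*α^2) * s ^ (-2:ℝ) :=
      fun s hs => (core_bounds h α hh0 hα v hv1 hveq s hs).2.2
    obtain ⟨V, hVm, hVe⟩ := v_measurableOn h α sbar hh0 hα hsbar v hv1 hveq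
    have hint : ∀ c, sbar ≤ c →
        IntegrableOn (fun t => v t - 1 - α / t) (Ioi c) volume :=
      core_int h α sbar hh0 hα hsbar v hbd V hVm hVe
    refine ⟨hint sbar le_rfl, ?_⟩
    -- minimum of a
    have hne : (Finset.univ : Finset (Fin n)).Nonempty := by
      have : 0 < n := lt_of_lt_of_le (by norm_num) hn
      exact ⟨⟨0, this⟩, Finset.mem_univ _⟩
    set m := Finset.univ.inf' hne a with hm
    have hmpos : 0 < m := (Finset.lt_inf'_iff hne).mpr fun i _ => ha i
    have hmle : ∀ i, m ≤ a i := fun i => Finset.inf'_le a (Finset.mem_univ i)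
    -- norm-square identity
    have hnormsq : ∀ x : En n, ‖x‖ ^ 2 = ∑ i, x i ^ 2 := by
      intro x
      rw [EuclideanSpace.norm_eq, Real.sq_sqrt (Finset.sum_nonneg fun i _ => sq_nonneg _)]
      congr 1
      ext i
      rw [Real.norm_eq_abs, sq_abs]
    have hsd : ∀ x : En n, (m / 2) * ‖x‖ ^ 2 ≤ sdiag a x := by
      intro x
      rw [sdiag, hnormsq, Finset.mul_sum, Finset.mul_sum]
      apply Finset.sum_le_sum
      intro i _
      have := sq_nonneg (x i)
      have := hmle i
      nlinarith
    refine ⟨2*h*α^2 * (2/m) + 1, max 1 (Real.sqrt (2 * sbar / m)), by positivity, by positivity, ?_⟩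
    intro x hx
    have hx1 : (1:ℝ) ≤ ‖x‖ := le_trans (le_max_left _ _) hx
    have hxsq : 2 * sbar / m ≤ ‖x‖ ^ 2 := by
      have h1 : Real.sqrt (2 * sbar / m) ≤ ‖x‖ := le_trans (le_max_right _ _) hx
      have h2 : 0 ≤ 2 * sbar / m := by positivity
      nlinarith [Real.sq_sqrt h2, Real.sqrt_nonneg (2 * sbar / m)]
    set s := sdiag a x with hsdef
    have hss : sbar ≤ s := by
      have := hsd x
      have : m / 2 * (2 * sbar / m) ≤ m / 2 * ‖x‖ ^ 2 := by nlinarith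
      have hms : m / 2 * (2 * sbar / m) = sbar := by field_simp
      linarith [hsd x]
    have hspos : 0 < s := lt_of_lt_of_le hsbar hss
    have hIoiS := hint s hss
    have hIoi := hint sbar le_rfl
    have hkey := core_interval α sbar s hsbar hss v hIoi hIoiS
    have htail := core_tail h α hh0 hα v hbd s hspos hIoiS
    rw [omegaA, ← hsdef, hkey]
    have hexpand : β + ((s - sbar) + α * (Real.log s - Real.log sbar)
          + (∫ t in Ioi sbar, (v t - 1 - α / t)) - ∫ t in Ioi s, (v t - 1 - α / t)) -
        (s + α * Real.log s +
          (β - sbar - α * Real.log sbar + ∫ t in Ioi sbar, (v t - 1 - α / t))) =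
        -(∫ t in Ioi s, (v t - 1 - α / t)) := by ring
    rw [hexpand, abs_neg]
    have hrp : ‖x‖ ^ (-2:ℝ) = 1 / ‖x‖ ^ 2 := rpow_neg_two_eq (by linarith)
    rw [hrp]
    have hsb : 2*h*α^2 / s ≤ 2*h*α^2 / (m / 2 * ‖x‖ ^ 2) := by
      apply div_le_div_of_nonneg_left (by positivity) (by positivity) (hsd x)
    have heq2 : 2*h*α^2 / (m / 2 * ‖x‖ ^ 2) = (2*h*α^2 * (2/m)) * (1 / ‖x‖ ^ 2) := by
      field_simp
    have hfin : (2*h*α^2 * (2/m)) * (1 / ‖x‖ ^ 2) ≤ (2*h*α^2 * (2/m) + 1) * (1 / ‖x‖ ^ 2) := by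
      apply mul_le_mul_of_nonneg_right (by linarith) (by positivity)
    calc |∫ t in Ioi s, (v t - 1 - α / t)| ≤ 2*h*α^2 / s := htail
    _ ≤ 2*h*α^2 / (m / 2 * ‖x‖ ^ 2) := hsb
    _ = (2*h*α^2 * (2/m)) * (1 / ‖x‖ ^ 2) := heq2
    _ ≤ (2*h*α^2 * (2/m) + 1) * (1 / ‖x‖ ^ 2) := hfin
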